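/- Let H be a complex Hilbert space, let T be a positive compact bounded linear operator on H, and let r ≥ 0. Then a vector x ∈ H satisfies limsup_{n→∞} ⟨T^n x, x⟩^{1/n} ≤ r if and only if x is orthogonal to every eigenvector of T whose eigenvalue is strictly greater than r. -/

import Mathlib

open scoped NNReal InnerProductSpace
open Filter Topology

/-- The absolute value `|T| = (T*T)^{1/2}` of a bounded operator on a complex Hilbert space. -/
noncomputable def opAbs {H : Type*} [NormedAddCommGroup H] [InnerProductSpace ℂ H]
    [CompleteSpace H] (T : H →L[ℂ] H) : H →L[ℂ] H :=
  CFC.sqrt (ContinuousLinearMap.adjoint T * T)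

/-- `|T ^ n| ^ (1 / n)`, via the continuous functional calculus. -/
noncomputable def absPow {H : Type*} [NormedAddCommGroup H] [InnerProductSpace ℂ H]
    [CompleteSpace H] (T : H →L[ℂ] H) (n : ℕ) : H →L[ℂ] H :=
  CFC.nnrpow (opAbs (T ^ n)) ((n : ℝ≥0))⁻¹

open ContinuousLinearMap

section AuxLemmas

variable {H : Type*} [NormedAddCommGroup H] [InnerProductSpace ℂ H] [CompleteSpace H]

lemma isPositive_pow {T : H →L[ℂ] H} (hT : T.IsPositive) (n : ℕ) : (T ^ n).IsPositive := by
  rcases Nat.even_or_odd n with ⟨k, hk⟩ | ⟨k, hk⟩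
  · have h1 : adjoint (T ^ k) ∘L (1 : H →L[ℂ] H) ∘L (T ^ k) = T ^ n := by
      rw [(hT.isSelfAdjoint.pow k).adjoint_eq]
      show T ^ k * (1 * T ^ k) = T ^ n
      rw [one_mul, ← pow_add]; congr 1; omega
    exact h1 ▸ isPositive_one.adjoint_conj (T ^ k)
  · have h1 : adjoint (T ^ k) ∘L T ∘L (T ^ k) = T ^ n := by
      rw [(hT.isSelfAdjoint.pow k).adjoint_eq]
      show T ^ k * (T * T ^ k) = T ^ n
      rw [← pow_succ', ← pow_add]; congr 1; omega
    exact h1 ▸ hT.adjoint_conj (T ^ k)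

lemma norm_apply_sq_le {T : H →L[ℂ] H} (hT : T.IsPositive) (x : H) :
    ‖T x‖ ^ 2 ≤ ‖T‖ * (⟪T x, x⟫_ℂ).re := by
  rcases eq_or_ne T 0 with rfl | hT0
  · simp
  have hn : 0 < ‖T‖ := norm_pos_iff.mpr hT0
  set s : ℝ := ‖T‖⁻¹ with hs
  have hsym := hT.isSelfAdjoint.isSymmetric
  have key : (0:ℝ) ≤ (⟪T (x - (s:ℂ) • T x), x - (s:ℂ) • T x⟫_ℂ).re := hT.re_inner_nonneg_left _
  have e1 : ⟪T (T x), x⟫_ℂ = (‖T x‖:ℂ)^2 := by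
    rw [hsym.apply_clm (T x) x, inner_self_eq_norm_sq_to_K]
    norm_num
  have e2 : ⟪T x, T x⟫_ℂ = (‖T x‖:ℂ)^2 := inner_self_eq_norm_sq_to_K _
  have expand : (⟪T (x - (s:ℂ) • T x), x - (s:ℂ) • T x⟫_ℂ).re
      = (⟪T x, x⟫_ℂ).re - 2 * s * ‖T x‖^2 + s^2 * (⟪T (T x), T x⟫_ℂ).re := by
    rw [map_sub, map_smul, inner_sub_left, inner_sub_right, inner_sub_right,
      inner_smul_left, inner_smul_right, inner_smul_left, inner_smul_right, e1, e2]
    simp [Complex.sub_re, Complex.add_re, Complex.mul_re, sq]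
    ring
  set A := (⟪T x, x⟫_ℂ).re
  set B := ‖T x‖^2 with hB
  set C := (⟪T (T x), T x⟫_ℂ).re
  have bnd : C ≤ ‖T‖ * B := by
    have h1 : C ≤ ‖T (T x)‖ * ‖T x‖ := by
      refine le_trans ?_ (norm_inner_le_norm (𝕜 := ℂ) (T (T x)) (T x))
      exact Complex.re_le_norm _
    have h2 := T.le_opNorm (T x)
    nlinarith [norm_nonneg (T x)]
  rw [expand] at key
  have h4 : s^2 * C ≤ s^2 * (‖T‖ * B) := mul_le_mul_of_nonneg_left bnd (sq_nonneg s)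
  have hs2 : s^2 * (‖T‖ * B) = s * B := by
    rw [hs]; field_simp
  have h3 : 0 ≤ A - s * B := by linarith
  have h5 : ‖T‖ * (s * B) = B := by rw [hs]; field_simp
  nlinarith

lemma exists_eigenvector_norm {S : H →L[ℂ] H} (hS : S.IsPositive)
    (hSc : IsCompactOperator (⇑S)) (hS0 : S ≠ 0) :
    ∃ v : H, ‖v‖ = 1 ∧ S v = (‖S‖ : ℂ) • v := by
  set M : ℝ := ‖S‖ with hM
  have hMpos : 0 < M := norm_pos_iff.mpr hS0
  -- choose an almost-maximizing sequence
  have hex : ∀ n : ℕ, ∃ z : H, ‖z‖ < 1 ∧ M - 1/(n+1) < ‖S z‖ := by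
    intro n
    exact S.exists_lt_apply_of_lt_opNorm (by
      have : (0:ℝ) < 1/(n+1) := by positivity
      linarith)
  choose u hu1 hu2 using hex
  have hu1' : ∀ n, ‖u n‖ ≤ 1 := fun n => (hu1 n).le
  have ha_ub : ∀ n, ‖S (u n)‖ ≤ M := fun n => by
    calc ‖S (u n)‖ ≤ ‖S‖ * ‖u n‖ := S.le_opNorm _
    _ ≤ M * 1 := by apply mul_le_mul_of_nonneg_left (hu1' n) (norm_nonneg S)
    _ = M := mul_one M
  -- a n → M
  have ha : Tendsto (fun n => ‖S (u n)‖) atTop (𝓝 M) := by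
    apply tendsto_of_tendsto_of_tendsto_of_le_of_le
      (g := fun n : ℕ => M - 1/(n+1)) (h := fun _ : ℕ => M)
    · have := tendsto_one_div_add_atTop_nhds_zero_nat (𝕜 := ℝ)
      simpa using (tendsto_const_nhds (x := M) (f := atTop)).sub this
    · exact tendsto_const_nhds
    · exact fun n => (hu2 n).le
    · exact ha_ub
  -- b n → M
  have hb_lb : ∀ n, ‖S (u n)‖^2 / M ≤ (⟪S (u n), u n⟫_ℂ).re := fun n => by
    rw [div_le_iff₀ hMpos]
    have := norm_apply_sq_le hS (u n)
    linarith [this]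
  have hb_ub : ∀ n, (⟪S (u n), u n⟫_ℂ).re ≤ M := fun n => by
    calc (⟪S (u n), u n⟫_ℂ).re ≤ ‖⟪S (u n), u n⟫_ℂ‖ := by
          exact Complex.re_le_norm _
    _ ≤ ‖S (u n)‖ * ‖u n‖ := norm_inner_le_norm _ _
    _ ≤ M * 1 := mul_le_mul (ha_ub n) (hu1' n) (norm_nonneg _) hMpos.le
    _ = M := mul_one M
  have hb : Tendsto (fun n => (⟪S (u n), u n⟫_ℂ).re) atTop (𝓝 M) := by
    apply tendsto_of_tendsto_of_tendsto_of_le_of_le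
      (g := fun n => ‖S (u n)‖^2 / M) (h := fun _ : ℕ => M)
    · have : Tendsto (fun n => ‖S (u n)‖^2 / M) atTop (𝓝 (M^2 / M)) :=
        (ha.pow 2).div_const M
      rwa [sq, mul_div_assoc, div_self hMpos.ne', mul_one] at this
    · exact tendsto_const_nhds
    · exact hb_lb
    · exact hb_ub
  -- ‖S uₙ - M uₙ‖ → 0
  have hc : Tendsto (fun n => ‖S (u n) - (M:ℂ) • u n‖) atTop (𝓝 0) := by
    have hsq : ∀ n, ‖S (u n) - (M:ℂ) • u n‖^2
        ≤ ‖S (u n)‖^2 - 2 * M * (⟪S (u n), u n⟫_ℂ).re + M^2 := by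
      intro n
      have hexp := @norm_sub_sq ℂ _ _ _ _ (S (u n)) ((M:ℂ) • u n)
      have hre : RCLike.re ⟪S (u n), (M:ℂ) • u n⟫_ℂ = M * (⟪S (u n), u n⟫_ℂ).re := by
        rw [inner_smul_right]
        simp [Complex.mul_re]
      have hnsm : ‖(M:ℂ) • u n‖ = M * ‖u n‖ := by
        rw [norm_smul]; simp [abs_of_pos hMpos]
      rw [hexp, hre, hnsm]
      have ha2 : ‖u n‖^2 ≤ 1 := by nlinarith [norm_nonneg (u n), hu1' n]
      have h1 : (M * ‖u n‖)^2 ≤ M^2 := by nlinarith [sq_nonneg M]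
      nlinarith
    have hd : Tendsto (fun n => ‖S (u n)‖^2 - 2 * M * (⟪S (u n), u n⟫_ℂ).re + M^2)
        atTop (𝓝 0) := by
      have := ((ha.pow 2).sub (hb.const_mul (2*M))).add (tendsto_const_nhds (x := M^2))
      have heq : M^2 - 2*M*M + M^2 = 0 := by ring
      rwa [heq] at this
    have hsq0 : Tendsto (fun n => ‖S (u n) - (M:ℂ) • u n‖^2) atTop (𝓝 0) := by
      apply tendsto_of_tendsto_of_tendsto_of_le_of_le
        (g := fun _ : ℕ => (0:ℝ)) (h := fun n => ‖S (u n)‖^2 - 2 * M * (⟪S (u n), u n⟫_ℂ).re + M^2)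
        tendsto_const_nhds hd (fun n => sq_nonneg _) hsq
    have := hsq0.sqrt
    simpa [Real.sqrt_sq (norm_nonneg _)] using this
  have hc' : Tendsto (fun n => S (u n) - (M:ℂ) • u n) atTop (𝓝 0) :=
    tendsto_zero_iff_norm_tendsto_zero.mpr hc
  -- compactness: extract convergent subsequence of S uₙ
  obtain ⟨K, hKc, hKsub⟩ :=
    IsCompactOperator.image_closedBall_subset_compact (f := (S : H →ₗ[ℂ] H)) hSc 1
  have hmem : ∀ n, S (u n) ∈ K := fun n =>
    hKsub ⟨u n, by simpa using hu1' n, rfl⟩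
  obtain ⟨y, hyK, φ, hφ, hconv⟩ := hKc.tendsto_subseq hmem
  -- uₙ subsequence converges to v := M⁻¹ • y
  have hMy : Tendsto (fun n => M • u (φ n)) atTop (𝓝 y) := by
    have := hconv.sub ((hc'.comp hφ.tendsto_atTop))
    simpa using this
  set v : H := M⁻¹ • y with hv
  have huv : Tendsto (fun n => u (φ n)) atTop (𝓝 v) := by
    have := hMy.const_smul (M⁻¹)
    simpa [hv, smul_smul, inv_mul_cancel₀ hMpos.ne'] using this
  have hSv : S v = y := by
    have h1 : Tendsto (fun n => S (u (φ n))) atTop (𝓝 (S v)) := (S.continuous.tendsto v).comp huv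
    exact tendsto_nhds_unique h1 hconv
  have hnv : ‖v‖ = 1 := by
    have h1 : Tendsto (fun n => ‖u (φ n)‖) atTop (𝓝 ‖v‖) := huv.norm
    have h2 : Tendsto (fun n => ‖u (φ n)‖) atTop (𝓝 1) := by
      apply tendsto_of_tendsto_of_tendsto_of_le_of_le
        (g := fun n => ‖S (u (φ n))‖ / M) (h := fun _ : ℕ => (1:ℝ))
      · have := (ha.comp hφ.tendsto_atTop).div_const M
        simpa [div_self hMpos.ne'] using this
      · exact tendsto_const_nhds
      · intro n
        rw [div_le_iff₀ hMpos]
        calc ‖S (u (φ n))‖ ≤ ‖S‖ * ‖u (φ n)‖ := S.le_opNorm _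
        _ = ‖u (φ n)‖ * M := by rw [mul_comm]
      · exact fun n => hu1' (φ n)
    exact tendsto_nhds_unique h1 h2
  refine ⟨v, hnv, ?_⟩
  rw [hSv, hv]
  have : (M:ℂ) • (M⁻¹ • y) = M • M⁻¹ • y := by
    norm_cast
  rw [this, smul_smul, mul_inv_cancel₀ hMpos.ne', one_smul]

/-- `(a^n * b)^(1/n) = a * b^(1/n)` for nonneg reals, `n ≠ 0`. -/
lemma rpow_pow_mul {a b : ℝ} (ha : 0 ≤ a) (hb : 0 ≤ b) {n : ℕ} (hn : n ≠ 0) :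
    (a ^ n * b) ^ (1/(n:ℝ)) = a * b ^ (1/(n:ℝ)) := by
  rw [Real.mul_rpow (pow_nonneg ha n) hb, ← Real.rpow_natCast a n,
    ← Real.rpow_mul ha]
  congr 2
  field_simp
  simp

/-- For `q > 0`, `q ^ (1/n) → 1`. -/
lemma tendsto_rpow_one_div {q : ℝ} (hq : 0 < q) :
    Tendsto (fun n : ℕ => q ^ (1/(n:ℝ))) atTop (𝓝 1) := by
  have h0 : Tendsto (fun n : ℕ => 1/(n:ℝ)) atTop (𝓝 0) := tendsto_one_div_atTop_nhds_zero_nat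
  have := (Real.continuousAt_const_rpow (a := q) (b := (0:ℝ)) hq.ne').tendsto.comp h0
  simpa [Real.rpow_zero, Function.comp_def] using this

lemma inner_pow_le {T : H →L[ℂ] H} (hT : T.IsPositive) (x : H) (n : ℕ) (hn : 1 ≤ n) :
    (⟪(T ^ n) x, x⟫_ℂ).re ≤ ‖T‖ ^ n * ‖x‖ ^ 2 := by
  calc (⟪(T ^ n) x, x⟫_ℂ).re ≤ ‖⟪(T ^ n) x, x⟫_ℂ‖ := by
        exact Complex.re_le_norm _
  _ ≤ ‖(T ^ n) x‖ * ‖x‖ := norm_inner_le_norm _ _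
  _ ≤ (‖T ^ n‖ * ‖x‖) * ‖x‖ := by
        have := (T ^ n).le_opNorm x
        nlinarith [norm_nonneg x]
  _ ≤ (‖T‖ ^ n * ‖x‖) * ‖x‖ := by
        have h1 : ‖T ^ n‖ ≤ ‖T‖ ^ n := norm_pow_le' T hn
        nlinarith [norm_nonneg x, norm_nonneg (T ^ n), sq_nonneg (‖x‖)]
  _ = ‖T‖ ^ n * ‖x‖ ^ 2 := by ring

/-- The sequence is bounded above. -/
lemma seq_bddAbove {T : H →L[ℂ] H} (hT : T.IsPositive) (x : H) :
    atTop.IsBoundedUnder (· ≤ ·) (fun n : ℕ => (⟪(T ^ n) x, x⟫_ℂ).re ^ (1 / n : ℝ)) := by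
  refine isBoundedUnder_of_eventually_le (a := ‖T‖ * max 1 (‖x‖^2)) ?_
  filter_upwards [eventually_ge_atTop 1] with n hn
  have hn0 : (n:ℕ) ≠ 0 := by omega
  have h1 : (⟪(T ^ n) x, x⟫_ℂ).re ≤ ‖T‖ ^ n * ‖x‖ ^ 2 := inner_pow_le hT x n hn
  have h0 : 0 ≤ (⟪(T ^ n) x, x⟫_ℂ).re := (isPositive_pow hT n).re_inner_nonneg_left x
  calc (⟪(T ^ n) x, x⟫_ℂ).re ^ (1/(n:ℝ)) ≤ (‖T‖ ^ n * ‖x‖ ^ 2) ^ (1/(n:ℝ)) :=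
        Real.rpow_le_rpow h0 h1 (by positivity)
  _ = ‖T‖ * (‖x‖ ^ 2) ^ (1/(n:ℝ)) := rpow_pow_mul (norm_nonneg T) (sq_nonneg _) hn0
  _ ≤ ‖T‖ * max 1 (‖x‖^2) := by
      apply mul_le_mul_of_nonneg_left ?_ (norm_nonneg T)
      rcases le_total (‖x‖^2) 1 with hc | hc
      · exact le_trans (Real.rpow_le_one (sq_nonneg _) hc (by positivity)) (le_max_left _ _)
      · refine le_trans ?_ (le_max_right _ _)
        calc (‖x‖^2) ^ (1/(n:ℝ)) ≤ (‖x‖^2) ^ (1:ℝ) := by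
              apply Real.rpow_le_rpow_of_exponent_le hc
              rw [div_le_one (by exact_mod_cast Nat.pos_of_ne_zero hn0)]
              exact_mod_cast hn
        _ = ‖x‖^2 := Real.rpow_one _

lemma seq_nonneg {T : H →L[ℂ] H} (hT : T.IsPositive) (x : H) (n : ℕ) :
    0 ≤ (⟪(T ^ n) x, x⟫_ℂ).re ^ (1 / n : ℝ) :=
  Real.rpow_nonneg ((isPositive_pow hT n).re_inner_nonneg_left x) _

end AuxLemmas

set_option synthInstance.maxHeartbeats 1000000 in
/-- For a positive compact operator `T` and `r ≥ 0`: `limsup ⟨T^n x,x⟫^{1/n} ≤ r` iff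
`x` is orthogonal to every eigenvector of `T` with eigenvalue strictly greater than `r`. -/
theorem limsup_le_iff_orthogonal_eigenvectors {H : Type*} [NormedAddCommGroup H]
    [InnerProductSpace ℂ H] [CompleteSpace H]
    (T : H →L[ℂ] H) (hT : T.IsPositive) (hTc : IsCompactOperator (⇑T))
    (r : ℝ) (hr : 0 ≤ r) (x : H) :
    atTop.limsup (fun n : ℕ => (⟪(T ^ n) x, x⟫_ℂ).re ^ (1 / n : ℝ)) ≤ r ↔
      ∀ μ : ℝ, r < μ → ∀ v : H, v ≠ 0 → T v = (μ : ℂ) • v → ⟪x, v⟫_ℂ = 0 := by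
  have hsym := hT.isSelfAdjoint.isSymmetric
  set f : ℕ → ℝ := fun n : ℕ => (⟪(T ^ n) x, x⟫_ℂ).re ^ (1 / n : ℝ) with hf
  constructor
  · -- forward direction
    intro h μ hμ v hv0 hveq
    by_contra hc
    have hvn : (0:ℝ) < ‖v‖ := norm_pos_iff.mpr hv0
    obtain ⟨u, hun, hTu, hcu⟩ : ∃ u : H, ‖u‖ = 1 ∧ T u = (μ:ℂ) • u ∧ ⟪u, x⟫_ℂ ≠ 0 := by
      refine ⟨((‖v‖⁻¹ : ℝ) : ℂ) • v, ?_, ?_, ?_⟩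
      · rw [norm_smul, Complex.norm_real, Real.norm_eq_abs,
          abs_of_pos (inv_pos.mpr hvn), inv_mul_cancel₀ hvn.ne']
      · rw [map_smul, hveq, smul_comm]
      · rw [inner_smul_left]
        simp only [ne_eq, mul_eq_zero, map_eq_zero, not_or]
        constructor
        · exact_mod_cast inv_ne_zero hvn.ne'
        · intro h0
          apply hc
          rw [← inner_conj_symm, h0, map_zero]
    have huu : ⟪u, u⟫_ℂ = 1 := by
      rw [inner_self_eq_norm_sq_to_K, hun]; norm_num
    obtain ⟨c, hcu', w, hxd, huw, hwu⟩ :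
        ∃ c : ℂ, c ≠ 0 ∧ ∃ w : H, x = c • u + w ∧ ⟪u, w⟫_ℂ = 0 ∧ ⟪w, u⟫_ℂ = 0 := by
      refine ⟨⟪u, x⟫_ℂ, hcu, x - ⟪u, x⟫_ℂ • u, by abel, ?_, ?_⟩
      · rw [inner_sub_right, inner_smul_right, huu, mul_one, sub_self]
      · rw [← inner_conj_symm, inner_sub_right, inner_smul_right, huu, mul_one, sub_self,
          map_zero]
    have hcu : c ≠ 0 := hcu'
    have hμ0 : 0 < μ := lt_of_le_of_lt hr hμ
    have hTnu : ∀ n : ℕ, (T ^ n) u = ((μ ^ n : ℝ) : ℂ) • u := by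
      intro n
      induction n with
      | zero => simp
      | succ k ih =>
          rw [pow_succ', ContinuousLinearMap.mul_apply, ih, map_smul, hTu, smul_smul]
          congr 1
          push_cast
          ring
    set q : ℝ := Complex.normSq c with hq
    have hq0 : 0 < q := Complex.normSq_pos.mpr hcu
    have key : ∀ n : ℕ, μ ^ n * q ≤ (⟪(T ^ n) x, x⟫_ℂ).re := by
      intro n
      have hTnw : ⟪(T ^ n) w, u⟫_ℂ = 0 := by
        rw [((isPositive_pow hT n).isSelfAdjoint.isSymmetric).apply_clm w u, hTnu,
          inner_smul_right, hwu, mul_zero]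
      have expand : ⟪(T ^ n) x, x⟫_ℂ
          = ((μ ^ n : ℝ) : ℂ) * (q : ℂ) + ⟪(T ^ n) w, w⟫_ℂ := by
        conv_lhs => rw [hxd]
        rw [map_add, map_smul, hTnu, inner_add_left, inner_add_right, inner_add_right,
          smul_smul, inner_smul_left, inner_smul_right, inner_smul_right, inner_smul_left,
          huu, huw, hTnw]
        rw [hq]
        push_cast [Complex.normSq_eq_conj_mul_self, map_mul, map_pow, Complex.conj_ofReal]
        ring
      have hre2 : (⟪(T ^ n) x, x⟫_ℂ).re = μ ^ n * q + (⟪(T ^ n) w, w⟫_ℂ).re := by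
        rw [expand, show ((μ ^ n : ℝ) : ℂ) * (q : ℂ) = ((μ ^ n * q : ℝ) : ℂ) by push_cast; ring]
        simp only [Complex.add_re, Complex.ofReal_re]
      rw [hre2]
      have h9 : (0:ℝ) ≤ (⟪(T ^ n) w, w⟫_ℂ).re := (isPositive_pow hT n).re_inner_nonneg_left w
      linarith
    -- lower bound sequence tends to μ
    set g : ℕ → ℝ := fun n => μ * q ^ (1/(n:ℝ)) with hg
    have hgf : g ≤ᶠ[atTop] f := by
      filter_upwards [eventually_ge_atTop 1] with n hn
      have hn0 : (n:ℕ) ≠ 0 := by omega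
      have h0 : (0:ℝ) ≤ μ ^ n * q := by positivity
      calc g n = (μ ^ n * q) ^ (1/(n:ℝ)) := (rpow_pow_mul hμ0.le hq0.le hn0).symm
      _ ≤ (⟪(T ^ n) x, x⟫_ℂ).re ^ (1/(n:ℝ)) :=
          Real.rpow_le_rpow h0 (key n) (by positivity)
    have hgt : Tendsto g atTop (𝓝 μ) := by
      simpa only [mul_one] using (tendsto_rpow_one_div hq0).const_mul μ
    have h1 : μ ≤ atTop.limsup f := by
      have h2 : atTop.limsup g ≤ atTop.limsup f :=
        limsup_le_limsup hgf (hgt.isCoboundedUnder_le) (seq_bddAbove hT x)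
      rwa [hgt.limsup_eq] at h2
    linarith
  · -- reverse direction
    intro h
    set s : Set H := {v : H | ∃ μ : ℝ, r < μ ∧ v ≠ 0 ∧ T v = (μ:ℂ) • v} with hs
    set Esp : Submodule ℂ H := Submodule.span ℂ s with hEsp
    set K : Submodule ℂ H := Espᗮ with hK
    have hxK : x ∈ K := by
      rw [hK, Submodule.mem_orthogonal]
      intro u hu
      induction hu using Submodule.span_induction with
      | mem v hv =>
          obtain ⟨μ, hμ, hv0, hveq⟩ := hv
          rw [← inner_conj_symm, h μ hμ v hv0 hveq, map_zero]
      | zero => rw [inner_zero_left]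
      | add a b _ _ iha ihb => rw [inner_add_left, iha, ihb, add_zero]
      | smul a z _ ih => rw [inner_smul_left, ih, mul_zero]
    have hinv : ∀ y ∈ K, T y ∈ K := by
      intro y hy
      rw [hK, Submodule.mem_orthogonal]
      intro u hu
      induction hu using Submodule.span_induction with
      | mem v hv =>
          obtain ⟨μ', hμ', hv0', hveq'⟩ := id hv
          rw [← hsym.apply_clm v y, hveq', inner_smul_left]
          have : ⟪v, y⟫_ℂ = 0 :=
            Submodule.inner_right_of_mem_orthogonal (Submodule.subset_span hv) hy
          rw [this, mul_zero]
      | zero => rw [inner_zero_left]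
      | add a b _ _ iha ihb => rw [inner_add_left, iha, ihb, add_zero]
      | smul a z _ ih => rw [inner_smul_left, ih, mul_zero]
    set S : K →L[ℂ] K := (T ∘L K.subtypeL).codRestrict K (fun z => hinv z z.2) with hS
    have hScoe : ∀ z : K, (S z : H) = T (z : H) := fun z => rfl
    have hSpos : S.IsPositive := by
      constructor
      · intro a b
        have := hsym.apply_clm (a : H) (b : H)
        simpa [Submodule.coe_inner, hScoe] using this
      · intro z
        rw [reApplyInnerSelf_apply]
        have := hT.re_inner_nonneg_left (z : H)
        simpa [Submodule.coe_inner, hScoe] using this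
    have hScomp : IsCompactOperator (⇑S) :=
      (hTc.comp_clm K.subtypeL).codRestrict (V := K)
        (fun z => hinv z z.2) Esp.isClosed_orthogonal
    have hSnorm : ‖S‖ ≤ r := by
      by_contra hlt
      push_neg at hlt
      have hS0 : S ≠ 0 := by
        intro h0
        rw [h0, opNorm_zero] at hlt
        linarith
      obtain ⟨v, hv1, hveq⟩ := exists_eigenvector_norm hSpos hScomp hS0
      have hvH : (v : H) ≠ 0 := by
        intro h0
        have h1 : ‖(v : H)‖ = 1 := hv1
        rw [h0] at h1
        simp at h1
      have hTv : T (v : H) = ((‖S‖ : ℝ) : ℂ) • (v : H) := by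
        have := congrArg (Subtype.val) hveq
        rw [hScoe] at this
        simpa using this
      have hvs : (v : H) ∈ s := ⟨‖S‖, hlt, hvH, hTv⟩
      have : ⟪(v : H), (v : H)⟫_ℂ = 0 :=
        Submodule.inner_right_of_mem_orthogonal (Submodule.subset_span hvs) v.2
      rw [inner_self_eq_zero] at this
      exact hvH this
    -- now bound the sequence
    have hTn : ∀ n : ℕ, (T ^ n) x = ((S ^ n) ⟨x, hxK⟩ : H) := by
      intro n
      induction n with
      | zero => simp
      | succ k ih => rw [pow_succ', ContinuousLinearMap.mul_apply, ih, ← hScoe, ← ContinuousLinearMap.mul_apply, ← pow_succ']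
    have hbound : ∀ n : ℕ, 1 ≤ n → (⟪(T ^ n) x, x⟫_ℂ).re ≤ r ^ n * ‖x‖ ^ 2 := by
      intro n hn
      have h1 : ‖(T ^ n) x‖ ≤ r ^ n * ‖x‖ := by
        rw [hTn n]
        rw [Submodule.norm_coe]
        calc ‖(S ^ n) ⟨x, hxK⟩‖ ≤ ‖S ^ n‖ * ‖(⟨x, hxK⟩ : K)‖ := (S ^ n).le_opNorm _
        _ ≤ ‖S‖ ^ n * ‖x‖ := by
            have h2 : ‖S ^ n‖ ≤ ‖S‖ ^ n := norm_pow_le' S hn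
            have h3 : ‖(⟨x, hxK⟩ : K)‖ = ‖x‖ := rfl
            rw [h3]
            exact mul_le_mul_of_nonneg_right h2 (norm_nonneg x)
        _ ≤ r ^ n * ‖x‖ :=
            mul_le_mul_of_nonneg_right (pow_le_pow_left₀ (norm_nonneg S) hSnorm n)
              (norm_nonneg x)
      calc (⟪(T ^ n) x, x⟫_ℂ).re ≤ ‖⟪(T ^ n) x, x⟫_ℂ‖ := by
            exact Complex.re_le_norm _
      _ ≤ ‖(T ^ n) x‖ * ‖x‖ := norm_inner_le_norm _ _
      _ ≤ (r ^ n * ‖x‖) * ‖x‖ := mul_le_mul_of_nonneg_right h1 (norm_nonneg x)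
      _ = r ^ n * ‖x‖ ^ 2 := by ring
    rcases eq_or_ne x 0 with rfl | hx0
    · have hev : ∀ᶠ n in atTop, f n ≤ r := by
        filter_upwards [eventually_ge_atTop 1] with n hn
        have hn0 : (n:ℕ) ≠ 0 := by omega
        have : f n = 0 := by
          simp only [hf]
          rw [inner_zero_right]
          simp only [Complex.zero_re]
          rw [Real.zero_rpow (by positivity)]
        rw [this]; exact hr
      exact limsup_le_of_le (isCoboundedUnder_le_of_le atTop (seq_nonneg hT 0)) hev
    · set g : ℕ → ℝ := fun n => r * (‖x‖^2) ^ (1/(n:ℝ)) with hg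
      have hfg : f ≤ᶠ[atTop] g := by
        filter_upwards [eventually_ge_atTop 1] with n hn
        have hn0 : (n:ℕ) ≠ 0 := by omega
        have h0 : 0 ≤ (⟪(T ^ n) x, x⟫_ℂ).re := (isPositive_pow hT n).re_inner_nonneg_left x
        calc f n ≤ (r ^ n * ‖x‖ ^ 2) ^ (1/(n:ℝ)) :=
              Real.rpow_le_rpow h0 (hbound n hn) (by positivity)
        _ = r * (‖x‖^2) ^ (1/(n:ℝ)) := rpow_pow_mul hr (sq_nonneg _) hn0
      have hgt : Tendsto g atTop (𝓝 r) := by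
        have hx2 : (0:ℝ) < ‖x‖^2 := pow_pos (norm_pos_iff.mpr hx0) 2
        simpa only [mul_one] using (tendsto_rpow_one_div hx2).const_mul r
      have h2 : atTop.limsup f ≤ atTop.limsup g :=
        limsup_le_limsup hfg (isCoboundedUnder_le_of_le atTop (seq_nonneg hT x))
          (hgt.isBoundedUnder_le)
      rwa [hgt.limsup_eq] at h2
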